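/- Suppose (x, λ, u, π₁, π₂, ν) ∈ ℝ^N × ℝ × ℝ^N × ℝ × ℝ^N × ℝ satisfies the KKT system: u + π₂ = 0; qᵢ·π₂ᵢ + ν = 0 for all i; π₁ + Σᵢ π₂ᵢ = 0; qᵢ·xᵢ + c₀ᵢ + uᵢ + λ = 0 for all i; Σᵢ xᵢ = Σᵢ aᵢ; π₁ ≥ 0, λmax − λ ≥ 0, and π₁·(λmax − λ) = 0. Then: uᵢ = ν/qᵢ for all i, π₁ = (Σᵢ 1/qᵢ)·ν, π₂ᵢ = −ν/qᵢ for all i, ν = (Σᵢ 1/qᵢ²)⁻¹ · Σᵢ (φ(λ)ᵢ − aᵢ), xᵢ = φ(λ)ᵢ − ν/qᵢ² for all i, and λ satisfies the scalar linear complementarity relation Σᵢ (φ(λ)ᵢ − aᵢ) ≥ 0, λmax − λ ≥ 0, (Σᵢ (φ(λ)ᵢ − aᵢ))·(λmax − λ) = 0. -/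

import Mathlib

/-- Any solution of the KKT system of the minimal-adjustment problem satisfies the stated closed
forms, and its price component satisfies the scalar linear complementarity relation. -/
theorem stmt_2 (N : ℕ) (hN : 0 < N) (q c₀ a : Fin N → ℝ) (hq : ∀ i, 0 < q i)
    (lamMax : ℝ) (φ : ℝ → Fin N → ℝ)
    (hφ : ∀ lam i, φ lam i = -(lam + c₀ i) / q i)
    (x u π₂ : Fin N → ℝ) (lam π₁ ν : ℝ)
    (h1 : ∀ i, u i + π₂ i = 0)
    (h2 : ∀ i, q i * π₂ i + ν = 0)
    (h3 : π₁ + ∑ i, π₂ i = 0)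
    (h4 : ∀ i, q i * x i + c₀ i + u i + lam = 0)
    (h5 : ∑ i, x i = ∑ i, a i)
    (h6 : 0 ≤ π₁) (h7 : 0 ≤ lamMax - lam) (h8 : π₁ * (lamMax - lam) = 0) :
    (∀ i, u i = ν / q i) ∧
      π₁ = (∑ i, 1 / q i) * ν ∧
      (∀ i, π₂ i = -ν / q i) ∧
      ν = (∑ i, 1 / (q i) ^ 2)⁻¹ * ∑ i, (φ lam i - a i) ∧
      (∀ i, x i = φ lam i - ν / (q i) ^ 2) ∧
      (0 ≤ ∑ i, (φ lam i - a i) ∧ 0 ≤ lamMax - lam ∧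
        (∑ i, (φ lam i - a i)) * (lamMax - lam) = 0) := by
  have hq0 : ∀ i, q i ≠ 0 := fun i => (hq i).ne'
  have hπ₂ : ∀ i, π₂ i = -ν / q i := by
    intro i
    have h := h2 i
    field_simp [hq0 i]
    linarith
  have hu : ∀ i, u i = ν / q i := by
    intro i
    have := h1 i
    rw [hπ₂ i] at this
    have : u i = -(-ν / q i) := by linarith
    rw [this]; ring
  have hπ₁ : π₁ = (∑ i, 1 / q i) * ν := by
    have : π₁ = -∑ i, π₂ i := by linarith
    rw [this, Finset.sum_congr rfl fun i _ => hπ₂ i, ← Finset.sum_neg_distrib,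
      Finset.sum_mul]
    apply Finset.sum_congr rfl
    intro i _
    field_simp
  have hx : ∀ i, x i = φ lam i - ν / (q i) ^ 2 := by
    intro i
    have h := h4 i
    rw [hu i] at h
    rw [hφ]
    have hq2 : (q i)^2 ≠ 0 := pow_ne_zero 2 (hq0 i)
    field_simp [hq0 i] at h ⊢
    linear_combination h
  have hsum : ∑ i, (φ lam i - a i) = (∑ i, 1 / (q i) ^ 2) * ν := by
    have := h5
    rw [Finset.sum_congr rfl fun i _ => hx i] at this
    rw [Finset.sum_sub_distrib] at this
    have h2 : ∑ i, ν / (q i)^2 = (∑ i, 1/(q i)^2) * ν := by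
      rw [Finset.sum_mul]
      apply Finset.sum_congr rfl
      intro i _
      field_simp
    rw [Finset.sum_sub_distrib]
    linarith [this, h2]
  have hq2sum : 0 < ∑ i, 1 / (q i) ^ 2 := by
    apply Finset.sum_pos (fun i _ => by have := hq i; positivity)
    exact Finset.univ_nonempty_iff.mpr ⟨⟨0, hN⟩⟩
  have hqsum : 0 < ∑ i, 1 / q i := by
    apply Finset.sum_pos (fun i _ => by have := hq i; positivity)
    exact Finset.univ_nonempty_iff.mpr ⟨⟨0, hN⟩⟩
  have hν : 0 ≤ ν := by
    by_contra h
    push_neg at h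
    nlinarith [hπ₁, hqsum]
  refine ⟨hu, hπ₁, hπ₂, ?_, hx, ?_, h7, ?_⟩
  · rw [hsum, inv_mul_cancel_left₀ hq2sum.ne']
  · exact hsum ▸ mul_nonneg hq2sum.le hν
  · rw [hsum]
    rcases mul_eq_zero.mp h8 with h | h
    · have : ν = 0 := by nlinarith [hπ₁, hqsum]
      rw [this]; ring
    · rw [h]; ring
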